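/- If m_i = 0, then the cubic Hermite interpolant P on [x_i, x_{i+1}] is monotone (hence constant) if and only if ḟ_i = ḟ_{i+1} = 0. -/

import Mathlib

/-- If the slope `m_i` vanishes, then the cubic Hermite interpolant is monotone
(hence constant) iff both derivative data vanish. -/
theorem fritsch_carlson_zero_slope
    (xi xip fi fip dfi dfip h m : ℝ)
    (hx : xi < xip)
    (hh : h = xip - xi)
    (hm : m = (fip - fi) / h)
    (hm0 : m = 0)
    (P : ℝ → ℝ)
    (hP : ∀ x, P x = fi + dfi * (x - xi) + ((m - dfi) / h) * (x - xi) ^ 2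
        + ((dfip + dfi - 2 * m) / h ^ 2) * (x - xi) ^ 2 * (x - xip)) :
    (MonotoneOn P (Set.Icc xi xip) ∨ AntitoneOn P (Set.Icc xi xip)) ↔
      (dfi = 0 ∧ dfip = 0) := by
  have hh0 : (0:ℝ) < h := by rw [hh]; linarith
  have hne : h ≠ 0 := ne_of_gt hh0
  have hxih : xip = xi + h := by rw [hh]; ring
  have hPi : P xi = fi := by rw [hP]; ring
  have hPip : P xip = fi := by
    rw [hP]
    have hxx : xip - xi = h := by rw [hh]
    rw [hxx, hm0]
    field_simp
    ring
  constructor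
  · intro hmono
    have hconst : ∀ x ∈ Set.Icc xi xip, P x = fi := by
      intro x hxm
      have h1 : xi ∈ Set.Icc xi xip := Set.left_mem_Icc.mpr (le_of_lt hx)
      have h2 : xip ∈ Set.Icc xi xip := Set.right_mem_Icc.mpr (le_of_lt hx)
      rcases hmono with hmo | han
      · have l1 := hmo h1 hxm hxm.1
        have l2 := hmo hxm h2 hxm.2
        rw [hPi] at l1; rw [hPip] at l2; linarith
      · have l1 := han h1 hxm hxm.1
        have l2 := han hxm h2 hxm.2
        rw [hPi] at l1; rw [hPip] at l2; linarith
    have ha : xi + h/2 ∈ Set.Icc xi xip := by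
      constructor
      · linarith
      · rw [hxih]; linarith
    have hb : xi + h/4 ∈ Set.Icc xi xip := by
      constructor
      · linarith
      · rw [hxih]; linarith
    have e1 := hconst _ ha
    have e2 := hconst _ hb
    rw [hP, hm0, hxih] at e1 e2
    field_simp at e1 e2
    ring_nf at e1 e2
    have h4 : h ^ 4 ≠ 0 := pow_ne_zero 4 hne
    have A : dfi - dfip = 0 := by
      have hz : h ^ 4 * (dfi - dfip) = 0 := by linear_combination h * e1
      exact (mul_eq_zero.mp hz).resolve_left h4
    have B : 3 * dfi - dfip = 0 := by
      have hz : h ^ 4 * (3 * dfi - dfip) = 0 := by linear_combination (h / 3) * e2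
      exact (mul_eq_zero.mp hz).resolve_left h4
    constructor <;> linarith
  · rintro ⟨h1, h2⟩
    left
    intro a _ b _ hab
    rw [hP, hP, h1, h2, hm0]
    simp
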